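/- Equivalence of the representations ρ_λ and ρ_{e^ξ λ}: let t > 0, let ξ ∈ C²([0,2π],ℝ) with ξ(0) = 0, and define the operator V_ξ on functions f : C₀ → ℂ by (V_ξ f)(x) = exp( −(1/(4t)) ∫₀^{2π} ξ′(u)² du − (1/(2t))⟨ξ,x⟩ ) · f(x+ξ). Then for every λ : [0,2π] → ℂ with Re λ, Im λ ∈ L², every α ∈ C²([0,2π],ℝ) with α(0) = 0 and every b ∈ L²([0,2π],ℝ), the intertwining identity V_ξ ∘ ρ_λ(α,b) = ρ_{e^ξ λ}(α,b) ∘ V_ξ holds pointwise on all functions f : C₀ → ℂ, where (e^ξ λ)(u) = e^{ξ(u)} λ(u). -/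

import Mathlib

open MeasureTheory Real

/-- Extension of a function on `[0, 2π]` to `ℝ` (by `0` outside). -/
noncomputable def pathExt (x : Set.Icc (0 : ℝ) (2 * π) → ℝ) : ℝ → ℝ :=
  fun u => if h : u ∈ Set.Icc (0 : ℝ) (2 * π) then x ⟨u, h⟩ else 0

/-- The integration-by-parts form `⟨h,x⟩ = h'(2π)x(2π) - ∫₀^{2π} x(u)h''(u) du` of the
Stieltjes integral `∫₀^{2π} h'(u) dx(u)`. -/
noncomputable def wienerPairing (h : ℝ → ℝ) (x : Set.Icc (0 : ℝ) (2 * π) → ℝ) : ℝ :=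
  deriv h (2 * π) * pathExt x (2 * π)
    - ∫ u in (0 : ℝ)..(2 * π), pathExt x u * deriv (deriv h) u

/-- The operator `ρ_λ(α, b)` of the based path group of the `ax+b` group, acting on
functionals of paths `x` on `[0,2π]`. -/
noncomputable def wienerRho (t : ℝ) (lam : ℝ → ℂ) (α b : ℝ → ℝ)
    (f : (Set.Icc (0 : ℝ) (2 * π) → ℝ) → ℂ) (x : Set.Icc (0 : ℝ) (2 * π) → ℝ) : ℂ :=
  Complex.exp (((-(1 / (4 * t)) * ∫ u in (0 : ℝ)..(2 * π), (deriv α u) ^ 2)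
      - (1 / (2 * t)) * wienerPairing α x : ℝ)) *
  Complex.exp (∫ u in (0 : ℝ)..(2 * π), lam u * (b u : ℂ) *
      Complex.exp ((pathExt x u : ℝ) : ℂ)) *
  f (x + fun u => α u.1)

/-- The intertwining operator
`(V_ξ f)(x) = exp(-(1/(4t))∫₀^{2π}ξ'(u)² du - (1/(2t))⟨ξ,x⟩) · f(x+ξ)`. -/
noncomputable def wienerV (t : ℝ) (ξ : ℝ → ℝ)
    (f : (Set.Icc (0 : ℝ) (2 * π) → ℝ) → ℂ) (x : Set.Icc (0 : ℝ) (2 * π) → ℝ) : ℂ :=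
  Complex.exp (((-(1 / (4 * t)) * ∫ u in (0 : ℝ)..(2 * π), (deriv ξ u) ^ 2)
      - (1 / (2 * t)) * wienerPairing ξ x : ℝ)) *
  f (x + fun u => ξ u.1)

lemma pathExt_contOn (x : Set.Icc (0 : ℝ) (2 * π) → ℝ) (hx : Continuous x) :
    ContinuousOn (pathExt x) (Set.Icc (0:ℝ) (2*π)) := by
  have h2 : (0:ℝ) ≤ 2*π := by positivity
  have : ContinuousOn (fun u => x (Set.projIcc 0 (2*π) h2 u)) (Set.Icc (0:ℝ) (2*π)) :=
    (hx.comp (continuous_projIcc)).continuousOn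
  refine this.congr fun u hu => ?_
  simp [pathExt, Set.projIcc_of_mem h2 hu, hu]

lemma pathExt_add_apply (x : Set.Icc (0 : ℝ) (2 * π) → ℝ) (g : ℝ → ℝ)
    {u : ℝ} (hu : u ∈ Set.Icc (0:ℝ) (2*π)) :
    pathExt (x + fun v => g v.1) u = pathExt x u + g u := by
  simp [pathExt, hu]

lemma deriv2_parts (g h : ℝ → ℝ) (hg : ContDiff ℝ 2 g) (hh : ContDiff ℝ 2 h)
    (hh0 : h 0 = 0) :
    ∫ u in (0:ℝ)..(2*π), h u * deriv (deriv g) u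
      = h (2*π) * deriv g (2*π) - ∫ u in (0:ℝ)..(2*π), deriv h u * deriv g u := by
  have hg' : ContDiff ℝ 1 (deriv g) :=
    (contDiff_succ_iff_deriv.mp (show ContDiff ℝ (1+1) g from by norm_num [hg])).2.2
  have h1 : ∀ u ∈ Set.uIcc (0:ℝ) (2*π), HasDerivAt h (deriv h u) u :=
    fun u _ => (hh.differentiable (by norm_num) u).hasDerivAt
  have h2 : ∀ u ∈ Set.uIcc (0:ℝ) (2*π), HasDerivAt (deriv g) (deriv (deriv g) u) u :=
    fun u _ => (hg'.differentiable one_ne_zero u).hasDerivAt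
  have h3 : IntervalIntegrable (deriv h) volume 0 (2*π) :=
    (hh.continuous_deriv (by norm_num)).intervalIntegrable _ _
  have h4 : IntervalIntegrable (deriv (deriv g)) volume 0 (2*π) :=
    (hg'.continuous_deriv le_rfl).intervalIntegrable _ _
  rw [intervalIntegral.integral_mul_deriv_eq_deriv_mul h1 h2 h3 h4, hh0]
  ring

lemma pairing_add (g ξ : ℝ → ℝ) (hg : ContDiff ℝ 2 g) (hξ : Continuous ξ)
    (x : Set.Icc (0 : ℝ) (2 * π) → ℝ) (hx : Continuous x) :
    wienerPairing g (x + fun u => ξ u.1)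
      = wienerPairing g x
        + (deriv g (2*π) * ξ (2*π) - ∫ u in (0:ℝ)..(2*π), ξ u * deriv (deriv g) u) := by
  have h2 : (0:ℝ) ≤ 2*π := by positivity
  have hmem : (2*π) ∈ Set.Icc (0:ℝ) (2*π) := ⟨h2, le_refl _⟩
  have hcont2 : Continuous (deriv (deriv g)) := by
    have hg' : ContDiff ℝ 1 (deriv g) :=
      (contDiff_succ_iff_deriv.mp (show ContDiff ℝ (1+1) g from by norm_num [hg])).2.2
    exact hg'.continuous_deriv le_rfl
  have hint : (∫ u in (0:ℝ)..(2*π), pathExt (x + fun v => ξ v.1) u * deriv (deriv g) u)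
      = (∫ u in (0:ℝ)..(2*π), pathExt x u * deriv (deriv g) u)
        + ∫ u in (0:ℝ)..(2*π), ξ u * deriv (deriv g) u := by
    have hi1 : IntervalIntegrable (fun u => pathExt x u * deriv (deriv g) u)
        volume 0 (2*π) := by
      apply ContinuousOn.intervalIntegrable
      rw [Set.uIcc_of_le h2]
      exact (pathExt_contOn x hx).mul hcont2.continuousOn
    rw [← intervalIntegral.integral_add (g := fun u => ξ u * deriv (deriv g) u) hi1
      ((hξ.mul hcont2).intervalIntegrable _ _)]
    refine intervalIntegral.integral_congr fun u hu => ?_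
    rw [Set.uIcc_of_le h2] at hu
    rw [pathExt_add_apply x ξ hu]; ring
  unfold wienerPairing
  rw [hint, pathExt_add_apply x ξ hmem]
  ring

lemma pairing_sym (g h : ℝ → ℝ) (hg : ContDiff ℝ 2 g) (hh : ContDiff ℝ 2 h)
    (hg0 : g 0 = 0) (hh0 : h 0 = 0) :
    deriv g (2*π) * h (2*π) - (∫ u in (0:ℝ)..(2*π), h u * deriv (deriv g) u)
      = deriv h (2*π) * g (2*π) - ∫ u in (0:ℝ)..(2*π), g u * deriv (deriv h) u := by
  rw [deriv2_parts g h hg hh hh0, deriv2_parts h g hh hg hg0]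
  rw [show (∫ u in (0:ℝ)..(2*π), deriv h u * deriv g u)
      = ∫ u in (0:ℝ)..(2*π), deriv g u * deriv h u from
    intervalIntegral.integral_congr fun u _ => mul_comm _ _]
  ring

/-- Equivalence of the representations `ρ_λ` and `ρ_{e^ξ λ}`: the operator `V_ξ`
intertwines them, `V_ξ ∘ ρ_λ(α,b) = ρ_{e^ξ λ}(α,b) ∘ V_ξ`, pointwise on all functionals
`f : C₀ → ℂ` (evaluated at points of `C₀`). -/
theorem wienerV_intertwines (t : ℝ) (ht : 0 < t)
    (ξ : ℝ → ℝ) (hξ : ContDiff ℝ 2 ξ) (hξ0 : ξ 0 = 0) (lam : ℝ → ℂ)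
    (hlamRe : MemLp (fun u => (lam u).re) 2 (volume.restrict (Set.Ioc 0 (2 * π))))
    (hlamIm : MemLp (fun u => (lam u).im) 2 (volume.restrict (Set.Ioc 0 (2 * π))))
    (α : ℝ → ℝ) (hα : ContDiff ℝ 2 α) (hα0 : α 0 = 0)
    (b : ℝ → ℝ) (hb : MemLp b 2 (volume.restrict (Set.Ioc 0 (2 * π))))
    (f : (Set.Icc (0 : ℝ) (2 * π) → ℝ) → ℂ)
    (x : Set.Icc (0 : ℝ) (2 * π) → ℝ) (hx : Continuous x)
    (hx0 : x ⟨0, Set.left_mem_Icc.mpr (by positivity)⟩ = 0) :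
    wienerV t ξ (wienerRho t lam α b f) x
      = wienerRho t (fun u => (Real.exp (ξ u) : ℂ) * lam u) α b (wienerV t ξ f) x := by
  have h2 : (0:ℝ) ≤ 2*π := by positivity
  unfold wienerV wienerRho
  have hfarg : (x + fun u : Set.Icc (0:ℝ) (2*π) => ξ u.1) + (fun u => α u.1)
      = (x + fun u : Set.Icc (0:ℝ) (2*π) => α u.1) + (fun u => ξ u.1) :=
    add_right_comm _ _ _
  have hIarg : (∫ u in (0:ℝ)..(2*π), lam u * (b u : ℂ) *
        Complex.exp ((pathExt (x + fun v => ξ v.1) u : ℝ) : ℂ))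
      = ∫ u in (0:ℝ)..(2*π), ((Real.exp (ξ u) : ℂ) * lam u) * (b u : ℂ) *
        Complex.exp ((pathExt x u : ℝ) : ℂ) := by
    refine intervalIntegral.integral_congr fun u hu => ?_
    rw [Set.uIcc_of_le h2] at hu
    simp only [pathExt_add_apply x ξ hu, Complex.ofReal_add, Complex.exp_add,
      Complex.ofReal_exp]
    ring
  rw [hfarg, hIarg]
  have key : Complex.exp (((-(1 / (4 * t)) * ∫ u in (0 : ℝ)..(2 * π), (deriv ξ u) ^ 2)
          - (1 / (2 * t)) * wienerPairing ξ x : ℝ)) *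
        Complex.exp (((-(1 / (4 * t)) * ∫ u in (0 : ℝ)..(2 * π), (deriv α u) ^ 2)
          - (1 / (2 * t)) * wienerPairing α (x + fun u => ξ u.1) : ℝ))
      = Complex.exp (((-(1 / (4 * t)) * ∫ u in (0 : ℝ)..(2 * π), (deriv α u) ^ 2)
          - (1 / (2 * t)) * wienerPairing α x : ℝ)) *
        Complex.exp (((-(1 / (4 * t)) * ∫ u in (0 : ℝ)..(2 * π), (deriv ξ u) ^ 2)
          - (1 / (2 * t)) * wienerPairing ξ (x + fun u => α u.1) : ℝ)) := by
    rw [← Complex.exp_add, ← Complex.exp_add]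
    congr 1
    norm_cast
    rw [pairing_add α ξ hα hξ.continuous x hx, pairing_add ξ α hξ hα.continuous x hx,
      pairing_sym α ξ hα hξ hα0 hξ0]
    ring
  linear_combination (Complex.exp (∫ u in (0:ℝ)..(2*π), ((Real.exp (ξ u) : ℂ) * lam u) * (b u : ℂ) *
      Complex.exp ((pathExt x u : ℝ) : ℂ)) *
    f ((x + fun u => α u.1) + fun u => ξ u.1)) * key
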